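/- arXiv:0910.3978 — 4 statements merged into one kernel-verified Lean document; each statement's English description precedes it below -/
import Mathlib

section
/- Let H : A → B be a functor and C a full subcategory of A whose inclusion I : C → A has a right adjoint R with counit μ : I∘R → id_A. If μ_X is an H-equivalence for every X, then μ_X is an isomorphism for every H-colocal X; consequently every H-colocal object lies in C. -/
open CategoryTheory

/-- Let `C` be the full subcategory of `A` given by a predicate `P` closed under
isomorphisms, whose inclusion `I` has a right adjoint `R` with counit `μ`. If every
`μ_X` is an `H`-equivalence, then `μ_X` is an isomorphism for every `H`-colocal `X`,
and consequently every `H`-colocal object lies in `C`. -/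
theorem smallest_colocal {A : Type*} [Category A] {B : Type*} [Category B]
    (H : A ⥤ B) (P : A → Prop)
    (hP : ∀ {X Y : A}, (X ≅ Y) → P X → P Y)
    (R : A ⥤ ObjectProperty.FullSubcategory P)
    (adj : ObjectProperty.ι P ⊣ R)
    (hμ : ∀ X : A, IsIso (H.map (adj.counit.app X)))
    (X : A)
    (hX : ∀ {U V : A} (ε : U ⟶ V), IsIso (H.map ε) →
      Function.Bijective (fun f : X ⟶ U => f ≫ ε)) :
    IsIso (adj.counit.app X) ∧ P X := by
  set ε := adj.counit.app X with hε
  obtain ⟨s, hs⟩ := (hX ε (hμ X)).2 (𝟙 X)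
  simp only at hs
  -- R.map ε is an isomorphism since the inclusion is fully faithful
  have hRε : IsIso (R.map ε) := inferInstance
  -- post-composition with ε is injective on morphisms from I(R X)
  have hεs : ε ≫ s = 𝟙 _ := by
    have h2 : adj.homEquiv _ _ (ε ≫ s) ≫ R.map ε = adj.homEquiv _ _ (𝟙 _) ≫ R.map ε := by
      rw [← adj.homEquiv_naturality_right, ← adj.homEquiv_naturality_right, Category.assoc,
        hs]
      simp
    rw [cancel_mono] at h2
    exact (adj.homEquiv _ _).injective h2
  have hiso : IsIso ε := ⟨s, hεs, hs⟩
  exact ⟨hiso, hP (asIso ε) (R.obj X).property⟩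
end

section
/- Let T ⊣ H be an adjunction with unit η and counit δ. If every object of the form H(X) is η-reflexive (η_{H(X)} is an isomorphism for all X in A), then the δ-reflexive objects of A coincide with the H-colocal objects of A. -/
open CategoryTheory

/-- If every object of the form `H(X)` is `η`-reflexive, then the `δ`-reflexive objects
of `A` coincide with the `H`-colocal objects. -/
theorem delta_reflexive_iff_colocal {A : Type*} [Category A] {B : Type*} [Category B]
    (H : A ⥤ B) (T : B ⥤ A) (adj : T ⊣ H)
    (h : ∀ X : A, IsIso (adj.unit.app (H.obj X))) :
    ∀ X : A, IsIso (adj.counit.app X) ↔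
      (∀ {U V : A} (ε : U ⟶ V), IsIso (H.map ε) →
        Function.Bijective (fun f : X ⟶ U => f ≫ ε)) := by
  intro X
  constructor
  · intro hδ U V ε hε
    -- the composite equivalence (X ⟶ U) ≃ (H X ⟶ H U)
    let E : ∀ W : A, (X ⟶ W) ≃ (H.obj X ⟶ H.obj W) := fun W =>
      ((asIso (adj.counit.app X)).symm.homCongr (Iso.refl W)).trans
        (adj.homEquiv (H.obj X) W)
    have key : (fun f : X ⟶ U => f ≫ ε) =
        (E V).symm ∘ (fun g => g ≫ H.map ε) ∘ (E U) := by
      funext f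
      apply (E V).injective
      simp only [Function.comp_apply, Equiv.apply_symm_apply]
      simp [E, Iso.homCongr, adj.homEquiv_naturality_right]
    rw [key]
    have hmid : Function.Bijective (fun g : H.obj X ⟶ H.obj U => g ≫ H.map ε) := by
      haveI := hε
      exact (Equiv.mk (fun g => g ≫ H.map ε) (fun g => g ≫ inv (H.map ε))
        (by intro g; simp) (by intro g; simp)).bijective
    exact ((E V).symm.bijective.comp hmid).comp (E U).bijective
  · intro hcol
    have hHδ : IsIso (H.map (adj.counit.app X)) := by
      have h1 : IsIso (adj.unit.app (H.obj X) ≫ H.map (adj.counit.app X)) := by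
        rw [adj.right_triangle_components]; exact ⟨⟨𝟙 _, by simp, by simp⟩⟩
      exact IsIso.of_isIso_comp_left (adj.unit.app (H.obj X)) _
    have hb := hcol (adj.counit.app X) hHδ
    obtain ⟨f, hf⟩ := hb.2 (𝟙 X)
    simp only at hf
    have hHf : H.map f ≫ H.map (adj.counit.app X) = 𝟙 _ := by
      rw [← H.map_comp, hf, H.map_id]
    have h3 : H.map (adj.counit.app X) ≫ H.map f = 𝟙 _ := by
      haveI := hHδ
      rw [← cancel_mono (H.map (adj.counit.app X))]
      simp [Category.assoc, hHf]
    have h2 : adj.counit.app X ≫ f = 𝟙 _ := by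
      apply (adj.homEquiv _ _).injective
      simp only [adj.homEquiv_unit, H.map_comp, H.map_id, Category.comp_id]
      rw [← Category.assoc, Category.assoc]; simp [h3]
    exact ⟨f, h2, hf⟩
end

section
/- For an adjunction T ⊣ H between categories A and B, the following are equivalent: (i) the η-reflexive objects of B coincide with the essential image of H; (ii) the δ-reflexive objects of A coincide with the essential image of T; (iii) the δ-reflexive objects of A coincide with the H-colocal objects; (iv) the η-reflexive objects of B coincide with the T-local objects. -/
open CategoryTheory

section SiscAux
variable {A : Type*} [Category A] {B : Type*} [Category B]

lemma sisc_isIso_of_comp_eq_id {X Y : A} (f : X ⟶ Y) (g : Y ⟶ X) [IsIso g]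
    (h : f ≫ g = 𝟙 X) : IsIso f := by
  have : f = 𝟙 X ≫ inv g := by rw [← h]; simp
  rw [this]; infer_instance

/-- T Y is always H-colocal. -/
lemma sisc_colocal_T (H : A ⥤ B) (T : B ⥤ A) (adj : T ⊣ H) (Y : B) {U V : A}
    (ε : U ⟶ V) (hε : IsIso (H.map ε)) :
    Function.Bijective (fun f : T.obj Y ⟶ U => f ≫ ε) := by
  have : (fun f : T.obj Y ⟶ U => f ≫ ε) =
      (adj.homEquiv Y V).symm ∘ (fun g : Y ⟶ H.obj U => g ≫ H.map ε) ∘ (adj.homEquiv Y U) := by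
    funext f
    simp only [Function.comp_apply, Equiv.eq_symm_apply]
    exact adj.homEquiv_naturality_right f ε
  rw [this]
  exact ((adj.homEquiv Y V).symm.bijective.comp
    ⟨fun a b h => by simpa using (cancel_mono (H.map ε)).mp h,
     fun h => ⟨h ≫ inv (H.map ε), by simp⟩⟩).comp (adj.homEquiv Y U).bijective

/-- H X is always T-local. -/
lemma sisc_local_H (H : A ⥤ B) (T : B ⥤ A) (adj : T ⊣ H) (X : A) {U V : B}
    (ε : U ⟶ V) (hε : IsIso (T.map ε)) :
    Function.Bijective (fun g : V ⟶ H.obj X => ε ≫ g) := by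
  have : (fun g : V ⟶ H.obj X => ε ≫ g) =
      (adj.homEquiv U X) ∘ (fun h : T.obj V ⟶ X => T.map ε ≫ h) ∘ (adj.homEquiv V X).symm := by
    funext g
    simp only [Function.comp_apply, ← Equiv.symm_apply_eq]
    exact adj.homEquiv_naturality_left_symm ε g
  rw [this]
  exact ((adj.homEquiv U X).bijective.comp
    ⟨fun a b h => by simpa using (cancel_epi (T.map ε)).mp h,
     fun h => ⟨inv (T.map ε) ≫ h, by simp⟩⟩).comp (adj.homEquiv V X).symm.bijective

/-- P → Q : if every η_{HX} is iso then every δ_{TY} is iso. -/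
lemma sisc_crux1 (H : A ⥤ B) (T : B ⥤ A) (adj : T ⊣ H)
    (hP : ∀ X : A, IsIso (adj.unit.app (H.obj X))) (Y : B) :
    IsIso (adj.counit.app (T.obj Y)) := by
  have hδ : ∀ X : A, IsIso (H.map (adj.counit.app X)) := by
    intro X
    have := hP X
    have h := adj.right_triangle_components X
    rw [IsIso.eq_inv_of_hom_inv_id h]
    infer_instance
  have e1 : H.map (T.map (adj.unit.app Y)) ≫ H.map (adj.counit.app (T.obj Y)) = 𝟙 _ := by
    rw [← H.map_comp]; simp
  have e2 : adj.unit.app (H.obj (T.obj Y)) ≫ H.map (adj.counit.app (T.obj Y)) = 𝟙 _ :=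
    adj.right_triangle_components (T.obj Y)
  have := hδ (T.obj Y)
  have e3 : H.map (T.map (adj.unit.app Y)) = adj.unit.app (H.obj (T.obj Y)) := by
    rw [← cancel_mono (H.map (adj.counit.app (T.obj Y))), e1, e2]; simp
  have e4 : H.map (adj.counit.app (T.obj Y) ≫ T.map (adj.unit.app Y)) = 𝟙 _ := by
    rw [H.map_comp, e3]
    have := hP (T.obj Y)
    rw [IsIso.eq_inv_of_hom_inv_id e2]
    simp
  have e5 : adj.counit.app (T.obj Y) ≫ T.map (adj.unit.app Y) = 𝟙 _ := by
    apply (adj.homEquiv _ _).injective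
    rw [Adjunction.homEquiv_unit, Adjunction.homEquiv_unit, e4]
    simp
  exact ⟨T.map (adj.unit.app Y), e5, adj.left_triangle_components Y⟩

/-- Q → P : if every δ_{TY} is iso then every η_{HX} is iso. -/
lemma sisc_crux2 (H : A ⥤ B) (T : B ⥤ A) (adj : T ⊣ H)
    (hQ : ∀ Y : B, IsIso (adj.counit.app (T.obj Y))) (X : A) :
    IsIso (adj.unit.app (H.obj X)) := by
  have hTη : ∀ Y : B, IsIso (T.map (adj.unit.app Y)) := by
    intro Y
    have := hQ Y
    exact sisc_isIso_of_comp_eq_id _ _ (adj.left_triangle_components Y)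
  have e1 : T.map (adj.unit.app (H.obj X)) ≫ T.map (H.map (adj.counit.app X)) = 𝟙 _ := by
    rw [← T.map_comp, adj.right_triangle_components]; simp
  have e2 : T.map (adj.unit.app (H.obj X)) ≫ adj.counit.app (T.obj (H.obj X)) = 𝟙 _ :=
    adj.left_triangle_components (H.obj X)
  have := hTη (H.obj X)
  have e3 : T.map (H.map (adj.counit.app X)) = adj.counit.app (T.obj (H.obj X)) := by
    rw [← cancel_epi (T.map (adj.unit.app (H.obj X))), e1, e2]
  have e4 : T.map (H.map (adj.counit.app X) ≫ adj.unit.app (H.obj X)) = 𝟙 _ := by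
    rw [T.map_comp, e3]
    have := hQ (H.obj X)
    rw [IsIso.eq_inv_of_inv_hom_id e2]
    simp
  have e5 : H.map (adj.counit.app X) ≫ adj.unit.app (H.obj X) = 𝟙 _ := by
    apply (adj.homEquiv _ _).symm.injective
    rw [Adjunction.homEquiv_counit, Adjunction.homEquiv_counit, e4]
    simp
  exact ⟨H.map (adj.counit.app X), adj.right_triangle_components X, e5⟩

/-- If δ_X is iso then H is bijective on homs out of X. -/
lemma sisc_Hmap_bij (H : A ⥤ B) (T : B ⥤ A) (adj : T ⊣ H) (X : A)
    (hX : IsIso (adj.counit.app X)) (U : A) :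
    Function.Bijective (fun f : X ⟶ U => H.map f) := by
  have : (fun f : X ⟶ U => H.map f) =
      (adj.homEquiv (H.obj X) U) ∘ (fun f : X ⟶ U => adj.counit.app X ≫ f) := by
    funext f
    simp only [Function.comp_apply, Adjunction.homEquiv_unit, Functor.map_comp,
      ← Category.assoc]
    rw [adj.right_triangle_components]
    simp
  rw [this]
  exact (adj.homEquiv (H.obj X) U).bijective.comp
    ⟨fun a b h => by simpa using (cancel_epi (adj.counit.app X)).mp h,
     fun h => ⟨inv (adj.counit.app X) ≫ h, by simp⟩⟩

/-- δ_X iso ⇒ X is H-colocal. -/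
lemma sisc_colocal_of_iso_counit (H : A ⥤ B) (T : B ⥤ A) (adj : T ⊣ H) (X : A)
    (hX : IsIso (adj.counit.app X)) {U V : A} (ε : U ⟶ V) (hε : IsIso (H.map ε)) :
    Function.Bijective (fun f : X ⟶ U => f ≫ ε) := by
  have hU := sisc_Hmap_bij H T adj X hX U
  have hV := sisc_Hmap_bij H T adj X hX V
  constructor
  · intro a b h
    apply hU.1
    have : H.map a ≫ H.map ε = H.map b ≫ H.map ε := by
      rw [← H.map_comp, ← H.map_comp]; exact congrArg H.map h
    exact (cancel_mono (H.map ε)).mp this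
  · intro g
    obtain ⟨f, hf⟩ := hU.2 (H.map g ≫ inv (H.map ε))
    refine ⟨f, hV.1 ?_⟩
    show H.map (f ≫ ε) = H.map g
    simp only at hf
    rw [H.map_comp, hf]
    simp

/-- If η_Y is iso then T is bijective on homs into Y. -/
lemma sisc_Tmap_bij (H : A ⥤ B) (T : B ⥤ A) (adj : T ⊣ H) (Y : B)
    (hY : IsIso (adj.unit.app Y)) (V : B) :
    Function.Bijective (fun g : V ⟶ Y => T.map g) := by
  have : (fun g : V ⟶ Y => T.map g) =
      (adj.homEquiv V (T.obj Y)).symm ∘ (fun g : V ⟶ Y => g ≫ adj.unit.app Y) := by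
    funext g
    simp only [Function.comp_apply, Adjunction.homEquiv_counit, Functor.map_comp,
      Category.assoc]
    rw [adj.left_triangle_components]
    simp
  rw [this]
  exact (adj.homEquiv V (T.obj Y)).symm.bijective.comp
    ⟨fun a b h => by simpa using (cancel_mono (adj.unit.app Y)).mp h,
     fun h => ⟨h ≫ inv (adj.unit.app Y), by simp⟩⟩

/-- η_Y iso ⇒ Y is T-local. -/
lemma sisc_local_of_iso_unit (H : A ⥤ B) (T : B ⥤ A) (adj : T ⊣ H) (Y : B)
    (hY : IsIso (adj.unit.app Y)) {U V : B} (ε : U ⟶ V) (hε : IsIso (T.map ε)) :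
    Function.Bijective (fun g : V ⟶ Y => ε ≫ g) := by
  have hU := sisc_Tmap_bij H T adj Y hY U
  have hV := sisc_Tmap_bij H T adj Y hY V
  constructor
  · intro a b h
    apply hV.1
    have : T.map ε ≫ T.map a = T.map ε ≫ T.map b := by
      rw [← T.map_comp, ← T.map_comp]; exact congrArg T.map h
    exact (cancel_epi (T.map ε)).mp this
  · intro g
    obtain ⟨f, hf⟩ := hV.2 (inv (T.map ε) ≫ T.map g)
    refine ⟨f, hU.1 ?_⟩
    show T.map (ε ≫ f) = T.map g
    simp only at hf
    rw [T.map_comp, hf]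
    simp

/-- Given idempotency (P) and colocality, δ_X is iso. -/
lemma sisc_iso_counit_of_colocal (H : A ⥤ B) (T : B ⥤ A) (adj : T ⊣ H)
    (hP : ∀ X : A, IsIso (adj.unit.app (H.obj X))) (X : A)
    (hc : ∀ {U V : A} (ε : U ⟶ V), IsIso (H.map ε) →
      Function.Bijective (fun f : X ⟶ U => f ≫ ε)) :
    IsIso (adj.counit.app X) := by
  have hδH : IsIso (H.map (adj.counit.app X)) := by
    have := hP X
    rw [IsIso.eq_inv_of_hom_inv_id (adj.right_triangle_components X)]
    infer_instance
  obtain ⟨s, hs⟩ := (hc (adj.counit.app X) hδH).2 (𝟙 X)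
  simp only at hs
  have h2 : adj.counit.app X ≫ s = 𝟙 _ := by
    apply (sisc_colocal_T H T adj (H.obj X) (adj.counit.app X) hδH).1
    show (adj.counit.app X ≫ s) ≫ adj.counit.app X = 𝟙 _ ≫ adj.counit.app X
    rw [Category.assoc, hs]
    simp
  exact ⟨s, h2, hs⟩

/-- Given idempotency (Q) and locality, η_Y is iso. -/
lemma sisc_iso_unit_of_local (H : A ⥤ B) (T : B ⥤ A) (adj : T ⊣ H)
    (hQ : ∀ Y : B, IsIso (adj.counit.app (T.obj Y))) (Y : B)
    (hl : ∀ {U V : B} (ε : U ⟶ V), IsIso (T.map ε) →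
      Function.Bijective (fun g : V ⟶ Y => ε ≫ g)) :
    IsIso (adj.unit.app Y) := by
  have hTη : IsIso (T.map (adj.unit.app Y)) := by
    have := hQ Y
    exact sisc_isIso_of_comp_eq_id _ _ (adj.left_triangle_components Y)
  obtain ⟨s, hs⟩ := (hl (adj.unit.app Y) hTη).2 (𝟙 Y)
  simp only at hs
  have h2 : s ≫ adj.unit.app Y = 𝟙 _ := by
    apply (sisc_local_H H T adj (T.obj Y) (adj.unit.app Y) hTη).1
    show adj.unit.app Y ≫ s ≫ adj.unit.app Y = adj.unit.app Y ≫ 𝟙 _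
    rw [← Category.assoc, hs]
    simp
  exact ⟨s, hs, h2⟩

end SiscAux

/-- For an adjunction `T ⊣ H`, the following are equivalent:
(i) the `η`-reflexive objects of `B` coincide with the essential image of `H`;
(ii) the `δ`-reflexive objects of `A` coincide with the essential image of `T`;
(iii) the `δ`-reflexive objects coincide with the `H`-colocal objects;
(iv) the `η`-reflexive objects coincide with the `T`-local objects. -/
theorem sisc_tfae {A : Type*} [Category A] {B : Type*} [Category B]
    (H : A ⥤ B) (T : B ⥤ A) (adj : T ⊣ H) :
    List.TFAE
      [ (∀ Y : B, IsIso (adj.unit.app Y) ↔ H.essImage Y),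
        (∀ X : A, IsIso (adj.counit.app X) ↔ T.essImage X),
        (∀ X : A, IsIso (adj.counit.app X) ↔
          (∀ {U V : A} (ε : U ⟶ V), IsIso (H.map ε) →
            Function.Bijective (fun f : X ⟶ U => f ≫ ε))),
        (∀ Y : B, IsIso (adj.unit.app Y) ↔
          (∀ {U V : B} (ε : U ⟶ V), IsIso (T.map ε) →
            Function.Bijective (fun g : V ⟶ Y => ε ≫ g))) ] := by
  tfae_have 1 → 2 := by
    intro h1 X
    have hP : ∀ X : A, IsIso (adj.unit.app (H.obj X)) :=
      fun X => (h1 _).mpr ⟨X, ⟨Iso.refl _⟩⟩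
    constructor
    · intro h
      exact ⟨H.obj X, ⟨asIso (adj.counit.app X)⟩⟩
    · rintro ⟨Y, ⟨e⟩⟩
      have hTY : IsIso (adj.counit.app (T.obj Y)) := sisc_crux1 H T adj hP Y
      have hn := adj.counit.naturality e.hom
      have : adj.counit.app X = inv ((H ⋙ T).map e.hom) ≫ adj.counit.app (T.obj Y) ≫ e.hom := by
        simp only [Functor.id_map] at hn
        rw [← hn, IsIso.inv_hom_id_assoc]
      rw [this]
      infer_instance
  tfae_have 2 → 3 := by
    intro h2 X
    have hQ : ∀ Y : B, IsIso (adj.counit.app (T.obj Y)) :=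
      fun Y => (h2 _).mpr ⟨Y, ⟨Iso.refl _⟩⟩
    have hP : ∀ X : A, IsIso (adj.unit.app (H.obj X)) := sisc_crux2 H T adj hQ
    constructor
    · intro h U V ε hε
      exact sisc_colocal_of_iso_counit H T adj X h ε hε
    · intro hc
      exact sisc_iso_counit_of_colocal H T adj hP X hc
  tfae_have 3 → 4 := by
    intro h3 Y
    have hQ : ∀ Y' : B, IsIso (adj.counit.app (T.obj Y')) :=
      fun Y' => (h3 _).mpr (fun ε hε => sisc_colocal_T H T adj Y' ε hε)
    constructor
    · intro h U V ε hε
      exact sisc_local_of_iso_unit H T adj Y h ε hε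
    · intro hl
      exact sisc_iso_unit_of_local H T adj hQ Y hl
  tfae_have 4 → 1 := by
    intro h4 Y
    have hP : ∀ X : A, IsIso (adj.unit.app (H.obj X)) :=
      fun X => (h4 _).mpr (fun ε hε => sisc_local_H H T adj X ε hε)
    constructor
    · intro h
      exact ⟨T.obj Y, ⟨(asIso (adj.unit.app Y)).symm⟩⟩
    · rintro ⟨X, ⟨e⟩⟩
      have hHX : IsIso (adj.unit.app (H.obj X)) := hP X
      have hn := adj.unit.naturality e.hom
      have : adj.unit.app Y = e.inv ≫ adj.unit.app (H.obj X) ≫ (T ⋙ H).map e.hom := by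
        simp only [Functor.id_map] at hn
        rw [← hn]
        simp
      rw [this]
      infer_instance
  tfae_finish
end

section
/- Let M be a monoid and A a right M-act that is a generator of the category of right M-acts. Then M is a retract of A, and consequently every M-act is H_A-colocal (a morphism of M-acts is an H_A-equivalence if and only if it is an isomorphism). -/
open CategoryTheory

universe u

/-- The category of right `M`-acts, as contravariant functors `SingleObj M ⥤ Type`. -/
abbrev ActCat (M : Type u) [Monoid M] := (SingleObj M)ᵒᵖ ⥤ Type u

/-- The hom functor `Hom_M(A, −)`, landing in right `E`-acts via a monoid map
`φ : E →* End A` (`E` acts on `Hom_M(A, X)` by precomposition). -/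
def homFunctor {M : Type u} [Monoid M] {E : Type u} [Monoid E] (A : ActCat M)
    (φ : E →* CategoryTheory.End A) : ActCat M ⥤ ActCat E where
  obj X :=
    { obj := fun _ => A ⟶ X
      map := fun e => TypeCat.ofHom (fun f => (φ e.unop : A ⟶ A) ≫ f)
      map_id := by
        intro x
        refine ConcreteCategory.hom_ext _ _ (fun f => ?_)
        show (φ ((𝟙 x).unop) : A ⟶ A) ≫ f = f
        rw [show (𝟙 x).unop = (1 : E) from rfl]
        simp [End.one_def]
      map_comp := by
        intro x y z g h
        refine ConcreteCategory.hom_ext _ _ (fun f => ?_)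
        show (φ ((g ≫ h).unop) : A ⟶ A) ≫ f = (φ h.unop : A ⟶ A) ≫ ((φ g.unop : A ⟶ A) ≫ f)
        rw [show (g ≫ h).unop = g.unop * h.unop from rfl]
        rw [map_mul]
        simp [End.mul_def] }
  map g := { app := fun _ => TypeCat.ofHom (fun f => f ≫ g) }

section Aux

variable {M : Type u} [Monoid M] (A : ActCat M)

/-- An element of `M` as a morphism of `SingleObj M`. -/
def toHom (u : M) : SingleObj.star M ⟶ SingleObj.star M := u

local notation "P" => yoneda.obj (SingleObj.star M)

/-- The set of values of morphisms `A ⟶ M`. -/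
def traceSet : Set M :=
  {m | ∃ (h : A ⟶ (yoneda.obj (SingleObj.star M))) (a : A.obj (Opposite.op (SingleObj.star M))),
    h.app _ a = m}

lemma traceSet_one_mem (hA : IsSeparator A) : (1 : M) ∈ traceSet A := by
  by_contra h1
  set N := traceSet A with hN
  let r : (M ⊕ M) → (M ⊕ M) → Prop := fun s t => ∃ n ∈ N, s = .inl n ∧ t = .inr n
  let Q := Quot r
  have hNmul : ∀ n ∈ N, ∀ u : M, n * u ∈ N := by
    rintro n ⟨h, a, rfl⟩ u
    refine ⟨h, A.map (toHom u).op a, ?_⟩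
    have hnat := types_congr_hom (h.naturality (toHom u).op) a
    simp only [types_comp_apply, yoneda_obj_map, TypeCat.ofHom_apply] at hnat
    rw [SingleObj.comp_as_mul] at hnat
    exact hnat
  let act : M → Q → Q := fun u =>
    Quot.lift (fun s => Quot.mk r (Sum.map (· * u) (· * u) s)) (by
      rintro s t ⟨n, hn, rfl, rfl⟩
      exact Quot.sound ⟨n * u, hNmul n hn u, rfl, rfl⟩)
  let Y : ActCat M :=
    { obj := fun _ => Q
      map := fun g => TypeCat.ofHom (act g.unop)
      map_id := by
        intro x
        refine ConcreteCategory.hom_ext _ _ (fun q => ?_)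
        induction q using Quot.ind with
        | _ s =>
          show Quot.mk r (Sum.map (· * (1:M)) (· * (1:M)) s) = Quot.mk r s
          cases s <;> simp
      map_comp := by
        intro x y z g h
        refine ConcreteCategory.hom_ext _ _ (fun q => ?_)
        induction q using Quot.ind with
        | _ s =>
          show Quot.mk r (Sum.map (· * ((g ≫ h).unop : M)) (· * ((g ≫ h).unop : M)) s) =
            Quot.mk r (Sum.map (· * (h.unop : M)) (· * (h.unop : M))
              (Sum.map (· * (g.unop : M)) (· * (g.unop : M)) s))
          have he : ((g ≫ h).unop : M) = (g.unop : M) * (h.unop : M) := rfl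
          cases s <;> simp [he, mul_assoc] }
  let g₁ : P ⟶ Y :=
    { app := fun x => TypeCat.ofHom (fun f => Quot.mk r (.inl f))
      naturality := by intro x y u; exact ConcreteCategory.hom_ext _ _ (fun f => rfl) }
  let g₂ : P ⟶ Y :=
    { app := fun x => TypeCat.ofHom (fun f => Quot.mk r (.inr f))
      naturality := by intro x y u; exact ConcreteCategory.hom_ext _ _ (fun f => rfl) }
  have heq : g₁ = g₂ := by
    apply hA.def
    intro h
    ext x a
    exact Quot.sound ⟨h.app x a, ⟨h, a, rfl⟩, rfl, rfl⟩
  have hq : Quot.mk r (Sum.inl (1 : M)) = Quot.mk r (Sum.inr (1 : M)) :=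
    types_congr_hom (congrFun (congrArg NatTrans.app heq) (Opposite.op (SingleObj.star M))) (1 : M)
  have := congrArg (Quot.lift (Sum.elim (fun _ => True) (fun m => m ∈ N)) (by
    rintro s t ⟨n, hn, rfl, rfl⟩
    simp [hn])) hq
  simp at this
  exact h1 this

end Aux

section Aux2

variable {M : Type u} [Monoid M] (A : ActCat M)

lemma retract_of_separator (hA : IsSeparator A) :
    ∃ (i : yoneda.obj (SingleObj.star M) ⟶ A) (p : A ⟶ yoneda.obj (SingleObj.star M)),
      i ≫ p = 𝟙 (yoneda.obj (SingleObj.star M)) := by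
  obtain ⟨p, a, hpa⟩ := traceSet_one_mem A hA
  refine ⟨{ app := fun x => TypeCat.ofHom (fun (f : x.unop ⟶ SingleObj.star M) => A.map f.op a), naturality := ?_ }, p, ?_⟩
  · intro x y u
    refine ConcreteCategory.hom_ext _ _ (fun f => ?_)
    show A.map ((u.unop ≫ f).op) a = (A.map f.op ≫ A.map u) a
    rw [← A.map_comp]
    rfl
  · ext x f
    show p.app x (A.map f.op a) = f
    have hnat := types_congr_hom (p.naturality f.op) a
    simp only [types_comp_apply] at hnat
    rw [hnat]
    show (yoneda.obj (SingleObj.star M)).map f.op (p.app _ a) = f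
    rw [hpa]
    show f ≫ 𝟙 (SingleObj.star M) = f
    simp

end Aux2

/-- If the right `M`-act `A` is a generator (separator) of the category of right
`M`-acts, then the regular act `M` is a retract of `A`, a morphism of `M`-acts is an
`H_A`-equivalence iff it is an isomorphism, and consequently every `M`-act is
`H_A`-colocal. -/
theorem generator_retract_colocal {M : Type u} [Monoid M] (A : ActCat M)
    (hA : IsSeparator A) :
    (∃ (i : yoneda.obj (SingleObj.star M) ⟶ A) (p : A ⟶ yoneda.obj (SingleObj.star M)),
        i ≫ p = 𝟙 (yoneda.obj (SingleObj.star M))) ∧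
    (∀ {U V : ActCat M} (ε : U ⟶ V),
      IsIso ((homFunctor A (MonoidHom.id (CategoryTheory.End A))).map ε) ↔ IsIso ε) ∧
    (∀ X : ActCat M, ∀ {U V : ActCat M} (ε : U ⟶ V),
      IsIso ((homFunctor A (MonoidHom.id (CategoryTheory.End A))).map ε) →
        Function.Bijective (fun f : X ⟶ U => f ≫ ε)) := by
  obtain ⟨i, p, hip⟩ := retract_of_separator A hA
  have key : ∀ {U V : ActCat M} (ε : U ⟶ V),
      IsIso ((homFunctor A (MonoidHom.id (CategoryTheory.End A))).map ε) → IsIso ε := by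
    intro U V ε hH
    have hbij : Function.Bijective (fun f : A ⟶ U => f ≫ ε) := by
      haveI := hH
      have : IsIso (((homFunctor A (MonoidHom.id (CategoryTheory.End A))).map ε).app
          (Opposite.op (SingleObj.star (CategoryTheory.End A)))) := inferInstance
      exact (isIso_iff_bijective _).mp this
    have hcomp : ∀ x : (SingleObj M)ᵒᵖ, IsIso (ε.app x) := by
      intro x
      rw [isIso_iff_bijective]
      show Function.Bijective (ε.app (Opposite.op (SingleObj.star M)))
      constructor
      · intro u₁ u₂ hu
        have h1 : yonedaEquiv.symm u₁ ≫ ε = yonedaEquiv.symm u₂ ≫ ε := by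
          apply yonedaEquiv.injective
          rw [yonedaEquiv_comp, yonedaEquiv_comp]
          simp only [Equiv.apply_symm_apply]
          exact hu
        have h2 : p ≫ yonedaEquiv.symm u₁ = p ≫ yonedaEquiv.symm u₂ := by
          apply hbij.1
          show (p ≫ yonedaEquiv.symm u₁) ≫ ε = (p ≫ yonedaEquiv.symm u₂) ≫ ε
          rw [Category.assoc, Category.assoc, h1]
        have h3 : yonedaEquiv.symm u₁ = yonedaEquiv.symm u₂ := by
          have := congrArg (fun q => i ≫ q) h2
          simpa [← Category.assoc, hip] using this
        exact yonedaEquiv.symm.injective h3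
      · intro v
        obtain ⟨g, hg⟩ := hbij.2 (p ≫ yonedaEquiv.symm v)
        refine ⟨yonedaEquiv (i ≫ g), ?_⟩
        have : ε.app (Opposite.op (SingleObj.star M)) (yonedaEquiv (i ≫ g))
            = yonedaEquiv ((i ≫ g) ≫ ε) := (yonedaEquiv_comp _ _).symm
        rw [this]
        have hg' : g ≫ ε = p ≫ yonedaEquiv.symm v := hg
        rw [Category.assoc, hg', ← Category.assoc, hip, Category.id_comp]
        simp
    haveI := hcomp
    exact NatIso.isIso_of_isIso_app ε
  refine ⟨⟨i, p, hip⟩, fun ε => ⟨key ε, fun h => ?_⟩, fun X U V ε hH => ?_⟩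
  · exact inferInstance
  · haveI := key ε hH
    constructor
    · intro f₁ f₂ h
      exact (cancel_mono ε).mp h
    · intro g
      exact ⟨g ≫ inv ε, by simp⟩
end
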